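/- Let Q_u = s₊(n⊗n − I/3) with n = (cos θ, sin θ, 0). Then the in-plane components are q1 = (s₊/2)cos(2θ), q2 = (s₊/2)sin(2θ), q3 = −s₊/6, and for θ : Ω → ℝ differentiable, the identity |∇q1|² + |∇q2|² + 3|∇q3|² = s₊²|∇θ|² holds pointwise; moreover the full anisotropic elastic density satisfies f_el(q1,q2,q3) = s₊²(1 + L2/2)|∇θ|². -/

import Mathlib

open Matrix

/-- Partial derivative in the first coordinate. -/
noncomputable def pdx (f : ℝ × ℝ → ℝ) (p : ℝ × ℝ) : ℝ :=
  deriv (fun x => f (x, p.2)) p.1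

/-- Partial derivative in the second coordinate. -/
noncomputable def pdy (f : ℝ × ℝ → ℝ) (p : ℝ × ℝ) : ℝ :=
  deriv (fun y => f (p.1, y)) p.2

lemma deriv_cos_comp (sp : ℝ) (g : ℝ → ℝ) (t : ℝ) (hg : DifferentiableAt ℝ g t) :
    deriv (fun x => sp / 2 * Real.cos (2 * g x)) t
      = -(sp * Real.sin (2 * g t)) * deriv g t := by
  have h : HasDerivAt (fun x => sp / 2 * Real.cos (2 * g x))
      (sp / 2 * (-Real.sin (2 * g t) * (2 * deriv g t))) t :=
    (((hg.hasDerivAt.const_mul 2).cos)).const_mul (sp / 2)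
  rw [h.deriv]; ring

lemma deriv_sin_comp (sp : ℝ) (g : ℝ → ℝ) (t : ℝ) (hg : DifferentiableAt ℝ g t) :
    deriv (fun x => sp / 2 * Real.sin (2 * g x)) t
      = sp * Real.cos (2 * g t) * deriv g t := by
  have h : HasDerivAt (fun x => sp / 2 * Real.sin (2 * g x))
      (sp / 2 * (Real.cos (2 * g t) * (2 * deriv g t))) t :=
    (((hg.hasDerivAt.const_mul 2).sin)).const_mul (sp / 2)
  rw [h.deriv]; ring

/-- For the uniaxial tensor `Q_u = s₊(n⊗n − I/3)` with `n = (cos θ, sin θ, 0)`,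
the reduced components are `q1 = (s₊/2)cos 2θ`, `q2 = (s₊/2)sin 2θ`, `q3 = −s₊/6`;
moreover `|∇q1|² + |∇q2|² + 3|∇q3|² = s₊²|∇θ|²` and
`f_el(q1,q2,q3) = s₊²(1 + L2/2)|∇θ|²` pointwise. -/
theorem uniaxial_elastic_energy (sp L2 : ℝ) (hL2 : -1 < L2) (θ : ℝ × ℝ → ℝ)
    (hθx : ∀ p : ℝ × ℝ, DifferentiableAt ℝ (fun x => θ (x, p.2)) p.1)
    (hθy : ∀ p : ℝ × ℝ, DifferentiableAt ℝ (fun y => θ (p.1, y)) p.2)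
    (q1 q2 q3 : ℝ × ℝ → ℝ)
    (hq1 : ∀ p, q1 p = sp / 2 * Real.cos (2 * θ p))
    (hq2 : ∀ p, q2 p = sp / 2 * Real.sin (2 * θ p))
    (hq3 : ∀ p, q3 p = -sp / 6) :
    (∀ p : ℝ × ℝ,
        sp • (vecMulVec ![Real.cos (θ p), Real.sin (θ p), 0]
              ![Real.cos (θ p), Real.sin (θ p), 0]
            - (1 / 3 : ℝ) • (1 : Matrix (Fin 3) (Fin 3) ℝ))
          = q1 p • (Matrix.single 0 0 (1 : ℝ) - Matrix.single 1 1 (1 : ℝ))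
            + q2 p • (Matrix.single 0 1 (1 : ℝ) + Matrix.single 1 0 (1 : ℝ))
            + q3 p • ((2 : ℝ) • Matrix.single 2 2 (1 : ℝ)
                - Matrix.single 0 0 (1 : ℝ) - Matrix.single 1 1 (1 : ℝ))) ∧
      (∀ p : ℝ × ℝ,
        pdx q1 p ^ 2 + pdy q1 p ^ 2 + pdx q2 p ^ 2 + pdy q2 p ^ 2
            + 3 * (pdx q3 p ^ 2 + pdy q3 p ^ 2)
          = sp ^ 2 * (pdx θ p ^ 2 + pdy θ p ^ 2)) ∧
      (∀ p : ℝ × ℝ,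
        (1 + L2 / 2) * (pdx q1 p ^ 2 + pdy q1 p ^ 2)
            + (1 + L2 / 2) * (pdx q2 p ^ 2 + pdy q2 p ^ 2)
            + (3 + L2 / 2) * (pdx q3 p ^ 2 + pdy q3 p ^ 2)
            + L2 * (pdy q1 p * pdy q3 p - pdx q1 p * pdx q3 p
                - pdy q2 p * pdx q3 p - pdx q2 p * pdy q3 p)
            + L2 * (pdy q2 p * pdx q1 p - pdy q1 p * pdx q2 p)
          = sp ^ 2 * (1 + L2 / 2) * (pdx θ p ^ 2 + pdy θ p ^ 2)) := by
  have e1 : q1 = fun p => sp / 2 * Real.cos (2 * θ p) := funext hq1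
  have e2 : q2 = fun p => sp / 2 * Real.sin (2 * θ p) := funext hq2
  have e3 : q3 = fun p => -sp / 6 := funext hq3
  subst e1 e2 e3
  have h1x : ∀ p : ℝ × ℝ, pdx (fun p => sp / 2 * Real.cos (2 * θ p)) p
      = -(sp * Real.sin (2 * θ p)) * pdx θ p := fun p =>
    deriv_cos_comp sp (fun x => θ (x, p.2)) p.1 (hθx p)
  have h1y : ∀ p : ℝ × ℝ, pdy (fun p => sp / 2 * Real.cos (2 * θ p)) p
      = -(sp * Real.sin (2 * θ p)) * pdy θ p := fun p =>
    deriv_cos_comp sp (fun y => θ (p.1, y)) p.2 (hθy p)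
  have h2x : ∀ p : ℝ × ℝ, pdx (fun p => sp / 2 * Real.sin (2 * θ p)) p
      = sp * Real.cos (2 * θ p) * pdx θ p := fun p =>
    deriv_sin_comp sp (fun x => θ (x, p.2)) p.1 (hθx p)
  have h2y : ∀ p : ℝ × ℝ, pdy (fun p => sp / 2 * Real.sin (2 * θ p)) p
      = sp * Real.cos (2 * θ p) * pdy θ p := fun p =>
    deriv_sin_comp sp (fun y => θ (p.1, y)) p.2 (hθy p)
  have h3x : ∀ p : ℝ × ℝ, pdx (fun _ : ℝ × ℝ => -sp / 6) p = 0 := fun p =>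
    deriv_const _ _
  have h3y : ∀ p : ℝ × ℝ, pdy (fun _ : ℝ × ℝ => -sp / 6) p = 0 := fun p =>
    deriv_const _ _
  have pyth : ∀ p : ℝ × ℝ,
      Real.sin (2 * θ p) ^ 2 + Real.cos (2 * θ p) ^ 2 = 1 := fun p =>
    Real.sin_sq_add_cos_sq _
  refine ⟨fun p => ?_, fun p => ?_, fun p => ?_⟩
  · have hc : Real.cos (θ p * 2) = 2 * Real.cos (θ p) ^ 2 - 1 := by
      rw [mul_comm]; exact Real.cos_two_mul _
    have hs : Real.sin (θ p * 2) = 2 * Real.sin (θ p) * Real.cos (θ p) := by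
      rw [mul_comm]; exact Real.sin_two_mul _
    have hp := Real.sin_sq_add_cos_sq (θ p)
    ext i j
    fin_cases i <;> fin_cases j <;>
      simp [vecMulVec, Matrix.one_apply, Real.cos_two_mul, Real.sin_two_mul, hc, hs] <;>
      first
        | ring1
        | linear_combination sp * hp
        | linear_combination (-sp) * hp
        | linear_combination sp / 2 * hp
        | linear_combination (-(sp / 2)) * hp
  · rw [h1x p, h1y p, h2x p, h2y p, h3x p, h3y p]
    linear_combination (sp ^ 2 * (pdx θ p ^ 2 + pdy θ p ^ 2)) * pyth p
  · rw [h1x p, h1y p, h2x p, h2y p, h3x p, h3y p]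
    linear_combination ((1 + L2 / 2) * sp ^ 2 * (pdx θ p ^ 2 + pdy θ p ^ 2)) * pyth p
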